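/- Let p be an odd prime, q a prime with q ≡ 1 (mod p), s ∈ {−1, 1}, and c an integer whose residue modulo q is nonzero and is not a pth power in 𝔽_q. Let t ≥ 1 be an integer with 2·c·p²·t ≡ c² + s (mod q). Write p⁴t² − s = M·r² with M squarefree and r ≥ 1, and assume M ≥ 2; set K = ℚ(√M) and E = p²·t + r·√M ∈ O_K, a unit of norm s. Then N(E − c) = (p²t − c)² − (p⁴t² − s) = c² + s − 2cp²t ≡ 0 (mod q), and E is not a pth power in O_K: there is no β ∈ O_K with β^p = E. -/

import Mathlib

lemma aux_cyclic_pow {G : Type*} [Group G] [Fintype G] [IsCyclic G] {x : G} {n k : ℕ}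
    (hcard : Fintype.card G = n * k) (hx : x ^ k = 1) : ∃ y : G, y ^ n = x := by
  obtain ⟨g, hg⟩ := IsCyclic.exists_generator (α := G)
  obtain ⟨j, hj⟩ := Subgroup.mem_zpowers_iff.mp (hg x)
  have horder : orderOf g = n * k := by
    rw [orderOf_eq_card_of_forall_mem_zpowers hg, Nat.card_eq_fintype_card, hcard]
  have hk0 : 0 < k := by
    have hcpos := Fintype.card_pos (α := G)
    rw [hcard] at hcpos
    exact Nat.pos_of_ne_zero fun h => by simp [h] at hcpos
  have h1 : g ^ (j * (k : ℤ)) = 1 := by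
    rw [zpow_mul, hj, zpow_natCast, hx]
  have hdvd : ((n * k : ℕ) : ℤ) ∣ j * (k : ℤ) := by
    rw [← horder]; exact orderOf_dvd_iff_zpow_eq_one.mpr h1
  obtain ⟨d, hd⟩ := hdvd
  have hjd : j = (n : ℤ) * d := by
    have hkz : (k : ℤ) ≠ 0 := by exact_mod_cast hk0.ne'
    apply mul_right_cancel₀ hkz
    rw [hd]; push_cast; ring
  refine ⟨g ^ d, ?_⟩
  rw [← zpow_natCast (g ^ d) n, ← zpow_mul, ← hj, hjd, mul_comm]

/-- with `p` an odd prime, `q ≡ 1 (mod p)` prime, `s = ±1`,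
`c` an integer whose residue mod `q` is nonzero and not a `p`th power in `𝔽_q`,
`t ≥ 1` with `2cp²t ≡ c² + s (mod q)`, and `p⁴t² − s = M·r²` (`M ≥ 2` squarefree,
`r ≥ 1`), the unit `E = p²t + r√M` of `O_{ℚ(√M)}` of norm `s` satisfies
`N(E − c) = (p²t − c)² − (p⁴t² − s) = c² + s − 2cp²t ≡ 0 (mod q)` and `E` is not
a `p`th power in `O_K`. -/
theorem unit_not_global_pth_power
    (p q : ℕ) (hp : p.Prime) (hoddp : Odd p) (hq : q.Prime) (hqp : q ≡ 1 [MOD p])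
    (s : ℤ) (hs : s = -1 ∨ s = 1)
    (c : ℤ) (hc0 : (c : ZMod q) ≠ 0) (hcp : ¬∃ y : ZMod q, y ^ p = (c : ZMod q))
    (t : ℤ) (ht : 1 ≤ t)
    (htcong : 2 * c * (p : ℤ) ^ 2 * t ≡ c ^ 2 + s [ZMOD (q : ℤ)])
    (M r : ℤ) (hM : 2 ≤ M) (hsqf : Squarefree M) (hr : 1 ≤ r)
    (hMr : (p : ℤ) ^ 4 * t ^ 2 - s = M * r ^ 2) :
    (((p : ℤ) ^ 2 * t - c) ^ 2 - M * r ^ 2 = c ^ 2 + s - 2 * c * (p : ℤ) ^ 2 * t ∧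
      (q : ℤ) ∣ c ^ 2 + s - 2 * c * (p : ℤ) ^ 2 * t) ∧
    ¬∃ u v : ℤ, (4 : ℤ) ∣ u ^ 2 - M * v ^ 2 ∧
      (((u : ℝ) + (v : ℝ) * Real.sqrt M) / 2) ^ p =
        (p : ℝ) ^ 2 * (t : ℝ) + (r : ℝ) * Real.sqrt M := by
  haveI : Fact q.Prime := ⟨hq⟩
  -- p divides q - 1
  have hpq1 : p ∣ q - 1 := (Nat.modEq_iff_dvd' hq.one_le).mp hqp.symm
  have hp2 : 2 ≤ p := hp.two_le
  have hq2 : q ≠ 2 := by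
    rintro rfl
    simp at hpq1
    omega
  have hdvd : (q : ℤ) ∣ c ^ 2 + s - 2 * c * (p : ℤ) ^ 2 * t := htcong.dvd
  have hfirst : ((p : ℤ) ^ 2 * t - c) ^ 2 - M * r ^ 2 =
      c ^ 2 + s - 2 * c * (p : ℤ) ^ 2 * t := by rw [← hMr]; ring
  refine ⟨⟨hfirst, hdvd⟩, ?_⟩
  rintro ⟨u, v, -, heq⟩
  -- basic facts
  have hM0 : (0 : ℤ) ≤ M := by linarith
  have hMnotsq : ∀ n : ℤ, M ≠ n * n := by
    intro n hn
    have : IsUnit n := hsqf n (by rw [hn])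
    rcases Int.isUnit_iff.mp this with h | h <;> rw [h] at hn <;> omega
  -- Zsqrtd setup
  set z : ℤ√M := ⟨u, v⟩ with hz_def
  set e : ℤ√M := ⟨(p : ℤ) ^ 2 * t, r⟩ with he_def
  have hzpow : z ^ p = 2 ^ p * e := by
    apply Zsqrtd.toReal_injective hM0 hMnotsq
    rw [map_pow, map_mul, map_pow]
    have hz2 : Zsqrtd.toReal hM0 z = (u : ℝ) + (v : ℝ) * Real.sqrt M := by
      rw [Zsqrtd.toReal_apply]
    have he2 : Zsqrtd.toReal hM0 e = (p : ℝ) ^ 2 * (t : ℝ) + (r : ℝ) * Real.sqrt M := by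
      rw [Zsqrtd.toReal_apply]; simp only [he_def]; push_cast; ring
    have h2 : Zsqrtd.toReal hM0 2 = 2 := by
      rw [show (2 : ℤ√M) = ((2 : ℤ) : ℤ√M) by norm_num, Zsqrtd.toReal_apply]
      simp
    rw [hz2, he2, h2, ← heq]
    rw [div_pow]
    field_simp
  -- mod q facts
  have h2q : (2 : ZMod q) ≠ 0 := by
    intro h
    have hq2' : (q : ℕ) ∣ 2 := (ZMod.natCast_eq_zero_iff 2 q).mp (by exact_mod_cast h)
    exact hq2 ((Nat.prime_dvd_prime_iff_eq hq Nat.prime_two).mp hq2')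
  have hcongq : (((p : ℤ) ^ 2 * t - c : ℤ) : ZMod q) ^ 2 = ((M : ℤ) : ZMod q) * ((r : ℤ) : ZMod q) ^ 2 := by
    have h0 : ((((p : ℤ) ^ 2 * t - c) ^ 2 - M * r ^ 2 : ℤ) : ZMod q) = 0 := by
      rw [hfirst]
      exact (ZMod.intCast_zmod_eq_zero_iff_dvd _ q).mpr hdvd
    push_cast at h0 ⊢
    linear_combination h0
  by_cases hMsq : IsSquare ((M : ℤ) : ZMod q)
  · -- Case A: M is a square mod q
    obtain ⟨m, hm⟩ := hMsq
    -- (p²t - c)² = (m r)²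
    have hfac : ((((p : ℤ) ^ 2 * t - c : ℤ) : ZMod q) - m * ((r : ℤ) : ZMod q)) *
        ((((p : ℤ) ^ 2 * t - c : ℤ) : ZMod q) + m * ((r : ℤ) : ZMod q)) = 0 := by
      linear_combination hcongq + ((r : ℤ) : ZMod q) ^ 2 * hm
    have hex : ∃ m' : ZMod q, m' * m' = ((M : ℤ) : ZMod q) ∧
        ((c : ℤ) : ZMod q) = (((p : ℤ) ^ 2 * t : ℤ) : ZMod q) + ((r : ℤ) : ZMod q) * m' := by
      rcases mul_eq_zero.mp hfac with h | h
      · refine ⟨-m, (neg_mul_neg m m).trans hm.symm, ?_⟩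
        push_cast at h ⊢
        linear_combination -h
      · refine ⟨m, hm.symm, ?_⟩
        push_cast at h ⊢
        linear_combination -h
    obtain ⟨m', hm'sq, hm'c⟩ := hex
    let φ : ℤ√M →+* ZMod q := Zsqrtd.lift ⟨m', hm'sq⟩
    have hφz : (φ z) ^ p = 2 ^ p * (c : ZMod q) := by
      rw [← map_pow, hzpow, map_mul, map_pow]
      have hφe : φ e = (c : ZMod q) := by
        show ((((p:ℤ)^2*t : ℤ) : ZMod q) + ((r : ℤ) : ZMod q) * m') = _
        exact hm'c.symm
      have hφ2 : φ (2 : ℤ√M) = 2 := by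
        rw [show (2 : ℤ√M) = ((2 : ℤ) : ℤ√M) by norm_num, map_intCast]; norm_num
      rw [hφe, hφ2]
    apply hcp
    refine ⟨φ z / 2, ?_⟩
    rw [div_pow, hφz, mul_comm, mul_div_assoc, div_self (pow_ne_zero _ h2q), mul_one]
  · -- Case B: M is not a square mod q
    have hrq : ((r : ℤ) : ZMod q) = 0 := by
      by_contra hr0
      apply hMsq
      refine ⟨(((p : ℤ) ^ 2 * t - c : ℤ) : ZMod q) / ((r : ℤ) : ZMod q), ?_⟩
      have hcq' := hcongq
      field_simp
      push_cast at hcq' ⊢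
      linear_combination -hcq'
    have hcq : ((c : ℤ) : ZMod q) = (((p : ℤ) ^ 2 * t : ℤ) : ZMod q) := by
      have h := hcongq
      rw [hrq] at h
      have h2 : (((p : ℤ) ^ 2 * t - c : ℤ) : ZMod q) = 0 := by
        have := pow_eq_zero_iff (n := 2) (by norm_num) |>.mp (by rw [h]; ring)
        exact this
      push_cast at h2 ⊢
      linear_combination -h2
    -- build the quadratic extension
    have hirr : Irreducible (Polynomial.X ^ 2 - Polynomial.C ((M : ℤ) : ZMod q)) := by
      apply X_pow_sub_C_irreducible_of_prime Nat.prime_two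
      intro b hb
      exact hMsq ⟨b, by rw [← hb]; ring⟩
    haveI : Fact (Irreducible (Polynomial.X ^ 2 - Polynomial.C ((M : ℤ) : ZMod q))) := ⟨hirr⟩
    have hf0 : (Polynomial.X ^ 2 - Polynomial.C ((M : ℤ) : ZMod q)) ≠ 0 := hirr.ne_zero
    set F := AdjoinRoot (Polynomial.X ^ 2 - Polynomial.C ((M : ℤ) : ZMod q)) with hF_def
    set m : F := AdjoinRoot.root _ with hm_def
    have castInt : ∀ n : ℤ, ((n : ℤ) : F) = algebraMap (ZMod q) F ((n : ℤ) : ZMod q) :=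
      fun n => (map_intCast (algebraMap (ZMod q) F) n).symm
    have hm2 : m * m = ((M : ℤ) : F) := by
      rw [← pow_two, castInt M, AdjoinRoot.algebraMap_eq]
      exact root_X_pow_sub_C_pow 2 _
    let φ : ℤ√M →+* F := Zsqrtd.lift ⟨m, hm2⟩
    have hcF0 : ((c : ℤ) : F) ≠ 0 := by
      rw [castInt c]
      simp only [ne_eq, map_eq_zero_iff _ (algebraMap (ZMod q) F).injective]
      exact hc0
    have h2F : (2 : F) ≠ 0 := by
      rw [show (2 : F) = algebraMap (ZMod q) F 2 from (map_ofNat _ 2).symm]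
      simp only [ne_eq, map_eq_zero_iff _ (algebraMap (ZMod q) F).injective]
      exact h2q
    have hφz : (φ z) ^ p = 2 ^ p * ((c : ℤ) : F) := by
      rw [← map_pow, hzpow, map_mul, map_pow]
      have hφ2 : φ (2 : ℤ√M) = 2 := by
        have e1 : (2 : ℤ√M) = ((2 : ℤ) : ℤ√M) := by norm_num
        calc φ (2 : ℤ√M) = φ ((2 : ℤ) : ℤ√M) := by rw [e1]
          _ = ((2 : ℤ) : F) := map_intCast φ 2
          _ = 2 := by norm_num
      have hφe : φ e = ((c : ℤ) : F) := by
        show (((p:ℤ)^2*t : ℤ) : F) + ((r : ℤ) : F) * m = _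
        have hr' : ((r : ℤ) : F) = 0 := by
          rw [castInt r, hrq, map_zero]
        have hc' : (((p:ℤ)^2*t : ℤ) : F) = ((c : ℤ) : F) := by
          rw [castInt ((p:ℤ)^2*t), castInt c, hcq]
        rw [hr', hc']; ring
      rw [hφ2, hφe]
    set y : F := φ z / 2 with hy_def
    have hyp : y ^ p = ((c : ℤ) : F) := by
      rw [hy_def, div_pow, hφz, mul_comm, mul_div_assoc, div_self (pow_ne_zero _ h2F), mul_one]
    have hy0 : y ≠ 0 := by
      intro h
      rw [h, zero_pow hp.ne_zero] at hyp
      exact hcF0 hyp.symm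
    -- finiteness and cardinality of F
    haveI : Module.Finite (ZMod q) F := (AdjoinRoot.powerBasis hf0).finite
    haveI : Finite F := Module.finite_of_finite (ZMod q)
    haveI : Fintype F := Fintype.ofFinite F
    have hcardF : Fintype.card F = q ^ 2 := by
      rw [Module.card_eq_pow_finrank (K := ZMod q) (V := F), (AdjoinRoot.powerBasis hf0).finrank,
        AdjoinRoot.powerBasis_dim, Polynomial.natDegree_X_pow_sub_C, ZMod.card]
    have hpq1' := hpq1
    obtain ⟨k, hk⟩ := hpq1'

    have hq1 : 1 ≤ q := hq.one_le
    -- field-side identities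
    have hcpow : (((c : ℤ) : F)) ^ (q - 1) = 1 := by
      rw [castInt c, ← map_pow, ZMod.pow_card_sub_one_eq_one hc0, map_one]
    have hyq1p : (y ^ (q - 1)) ^ p = 1 := by
      rw [← pow_mul, mul_comm, pow_mul, hyp, hcpow]
    have hyq1q : (y ^ (q - 1)) ^ (q + 1) = 1 := by
      have hcard1 : y ^ (q ^ 2 - 1) = 1 := by
        have h := FiniteField.pow_card_sub_one_eq_one y hy0
        rwa [hcardF] at h
      rw [← pow_mul]
      have hqe : (q - 1) * (q + 1) = q ^ 2 - 1 := by
        obtain ⟨n, rfl⟩ := Nat.exists_eq_add_of_le hq.one_le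
        have e1 : (1 + n) ^ 2 = n * n + 2 * n + 1 := by ring
        have e2 : (1 + n - 1) * (1 + n + 1) = n * n + 2 * n := by
          rw [Nat.add_sub_cancel_left]; ring
        omega
      rw [hqe, hcard1]
    -- units argument
    set Y : Fˣ := Units.mk0 y hy0 with hY_def
    have hYp : (Y ^ (q - 1)) ^ p = 1 := by
      apply Units.ext
      simpa [hY_def, Units.val_pow_eq_pow_val] using hyq1p
    have hYq : (Y ^ (q - 1)) ^ (q + 1) = 1 := by
      apply Units.ext
      simpa [hY_def, Units.val_pow_eq_pow_val] using hyq1q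
    have hcop : Nat.gcd p (q + 1) = 1 := by
      have : ¬ p ∣ (q + 1) := by
        intro hpd
        have h2 : p ∣ (q + 1) - (q - 1) := Nat.dvd_sub hpd hpq1
        have he : (q + 1) - (q - 1) = 2 := by omega
        rw [he] at h2
        have hp2' : p = 2 := (Nat.prime_dvd_prime_iff_eq hp Nat.prime_two).mp h2
        rw [hp2'] at hoddp
        exact absurd hoddp (by decide)
      exact (Nat.Prime.coprime_iff_not_dvd hp).mpr this
    have hY1 : Y ^ (q - 1) = 1 := by
      rw [← orderOf_eq_one_iff]
      have hd1 := orderOf_dvd_of_pow_eq_one hYp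
      have hd2 := orderOf_dvd_of_pow_eq_one hYq
      have hdg := Nat.dvd_gcd hd1 hd2
      rw [hcop] at hdg
      exact Nat.dvd_one.mp hdg
    have hy1 : y ^ (q - 1) = 1 := by
      have h := congrArg Units.val hY1
      simpa [hY_def, Units.val_pow_eq_pow_val] using h
    -- c^k = 1 in ZMod q
    have hck : ((c : ZMod q)) ^ k = 1 := by
      apply (algebraMap (ZMod q) F).injective
      rw [map_pow, map_one, ← castInt c, ← hyp, ← pow_mul, ← hk, hy1]
    -- conclude c is a p-th power mod q, contradiction
    apply hcp
    have hcardU : Fintype.card (ZMod q)ˣ = p * k := by rw [ZMod.card_units, hk]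
    obtain ⟨w, hw⟩ := aux_cyclic_pow (x := Units.mk0 (c : ZMod q) hc0) hcardU
      (by apply Units.ext; simpa [Units.val_pow_eq_pow_val] using hck)
    refine ⟨(w : ZMod q), ?_⟩
    simpa [Units.val_pow_eq_pow_val] using congrArg Units.val hw
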